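/- For every integer k ≥ 3 there exist a real constant C > 0 and a natural number N such that for all n ≥ N, all natural numbers L ≤ n, and all m ≤ n satisfying either m − n/2 ≤ −n^{1−4/(3k)}, or (k is even and m − n/2 ≥ n^{1−4/(3k)}): |1 + ω_{n,m,k}/C(n,k)|^L ≤ C · (1 + (1−2m/n)^k)^L. -/

import Mathlib

open Finset Filter Polynomial

attribute [local instance] Classical.propDecidable

/-- `ω_{n,m,k} = ∑_{s=0}^{k} (−1)^s C(m,s) C(n−m,k−s)`. -/
def omegaW (n m k : ℕ) : ℤ :=
  ∑ s ∈ Finset.range (k + 1), (-1 : ℤ) ^ s * (m.choose s : ℤ) * ((n - m).choose (k - s) : ℤ)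

section Helpers

lemma coeff_sub (a s : ℕ) : ((1 - X : ℤ[X]) ^ a).coeff s = (-1)^s * a.choose s := by
  have h : (1 - X : ℤ[X]) = -1 * (X + C (-1)) := by simp; ring
  rw [h, mul_pow, ← C_1, ← C_neg, ← C_pow, coeff_C_mul, coeff_X_add_C_pow]
  rcases le_or_gt s a with hs | hs
  · rw [← mul_assoc, ← pow_add]
    have : a + (a - s) = 2 * (a - s) + s := by omega
    rw [this, pow_add, pow_mul]
    simp
  · simp [Nat.choose_eq_zero_of_lt hs]

lemma omegaW_eq_coeff (n m k : ℕ) :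
    omegaW n m k = ((1 - X : ℤ[X])^m * (1 + X)^(n - m)).coeff k := by
  rw [coeff_mul, Finset.Nat.sum_antidiagonal_eq_sum_range_succ
    (fun i j => ((1 - X : ℤ[X])^m).coeff i * ((1 + X : ℤ[X])^(n-m)).coeff j)]
  refine (Finset.sum_congr rfl fun s hs => ?_).symm
  rw [coeff_sub, coeff_one_add_X_pow]

lemma coeff_sq_mul (a : ℕ) (q : ℤ[X]) (k : ℕ) :
    ((1 - X^2)^a * q).coeff k
      = ∑ j ∈ range (a+1), (-1)^j * (a.choose j : ℤ) *
          (if 2*j ≤ k then q.coeff (k - 2*j) else 0) := by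
  have h : (1 - X^2 : ℤ[X])^a = ∑ j ∈ range (a+1), C ((-1)^j * (a.choose j : ℤ)) * X^(2*j) := by
    have h2 : (1 - X^2 : ℤ[X]) = (-(X^2)) + 1 := by ring
    rw [h2, add_pow]
    refine Finset.sum_congr rfl fun j hj => ?_
    rw [neg_pow, ← pow_mul, ← C_eq_natCast, C_mul, C_pow, map_neg, C_1]
    ring
  rw [h, Finset.sum_mul, finset_sum_coeff]
  refine Finset.sum_congr rfl fun j hj => ?_
  rw [mul_assoc, coeff_C_mul, mul_comm (X^(2*j)) q, coeff_mul_X_pow']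

/-- expansion when `2m ≤ n` -/
lemma omegaW_expand_low (n m k : ℕ) (h : 2*m ≤ n) :
    omegaW n m k = ∑ j ∈ range (m+1), (-1)^j * (m.choose j : ℤ) *
        (if 2*j ≤ k then ((n - 2*m).choose (k - 2*j) : ℤ) else 0) := by
  rw [omegaW_eq_coeff]
  have h1 : n - m = m + (n - 2*m) := by omega
  have h2 : (1 - X : ℤ[X])^m * (1 + X)^(n - m) = (1 - X^2)^m * (1 + X)^(n - 2*m) := by
    rw [h1, pow_add, ← mul_assoc, ← mul_pow]
    ring_nf
  rw [h2, coeff_sq_mul]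
  refine Finset.sum_congr rfl fun j hj => ?_
  rw [coeff_one_add_X_pow]

/-- expansion when `n ≤ 2m`, `k` even -/
lemma omegaW_expand_high (n m k : ℕ) (h : n ≤ 2*m) (h2 : m ≤ n) (hk : Even k) :
    omegaW n m k = ∑ j ∈ range ((n-m)+1), (-1)^j * ((n-m).choose j : ℤ) *
        (if 2*j ≤ k then ((2*m - n).choose (k - 2*j) : ℤ) else 0) := by
  rw [omegaW_eq_coeff]
  have hP : (1 - X : ℤ[X])^m * (1 + X)^(n - m) = (1 - X^2)^(n - m) * (1 - X)^(2*m - n) := by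
    have h1 : m = (n - m) + (2*m - n) := by omega
    conv_lhs => rw [h1]
    have h3 : n - (n - m + (2*m - n)) = n - m := by omega
    rw [h3, pow_add, mul_right_comm, ← mul_pow]
    ring_nf
  rw [hP, coeff_sq_mul]
  refine Finset.sum_congr rfl fun j hj => ?_
  congr 1
  split_ifs with hjk
  · rw [coeff_sub]
    have : (-1:ℤ)^(k - 2*j) = 1 := by
      rcases hk with ⟨t, ht⟩
      have : k - 2*j = 2*(t - j) := by omega
      rw [this, pow_mul]; norm_num
    rw [this, one_mul]
  · rfl

/-- trivial bound `|ω| ≤ C(n,k)` -/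
lemma omegaW_abs_le (n m k : ℕ) (h : m ≤ n) : |omegaW n m k| ≤ (n.choose k : ℤ) := by
  have hv : (n.choose k : ℤ) = ∑ s ∈ range (k+1), (m.choose s : ℤ) * ((n-m).choose (k-s) : ℤ) := by
    have := Nat.add_choose_eq m (n - m) k
    rw [Nat.add_sub_cancel' h] at this
    rw [this, Finset.Nat.sum_antidiagonal_eq_sum_range_succ (fun i j => m.choose i * (n-m).choose j)]
    push_cast
    rfl
  calc |omegaW n m k| ≤ ∑ s ∈ range (k+1), |(-1:ℤ)^s * (m.choose s : ℤ) * ((n-m).choose (k-s) : ℤ)| :=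
        Finset.abs_sum_le_sum_abs _ _
    _ = ∑ s ∈ range (k+1), (m.choose s : ℤ) * ((n-m).choose (k-s) : ℤ) := by
        refine Finset.sum_congr rfl fun s _ => ?_
        rw [abs_mul, abs_mul, abs_pow, abs_neg, abs_one, one_pow, one_mul,
          Nat.abs_cast, Nat.abs_cast]
    _ = (n.choose k : ℤ) := hv.symm

lemma choose_le_pow' (a j : ℕ) : a.choose j ≤ a ^ j :=
  le_trans (by rw [Nat.descFactorial_eq_factorial_mul_choose]; exact Nat.le_mul_of_pos_left _ j.factorial_pos) (Nat.descFactorial_le_pow a j)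

lemma term_bound (a d n k j : ℕ) (ha : a ≤ n) (hd : d ≤ n) (hn : 1 ≤ n)
    (hj : 2 ≤ j) (hjk : 2*j ≤ k) : a.choose j * d.choose (k - 2*j) ≤ n^(k-2) := by
  calc a.choose j * d.choose (k-2*j) ≤ a^j * d^(k-2*j) :=
        Nat.mul_le_mul (choose_le_pow' a j) (choose_le_pow' d (k-2*j))
    _ ≤ n^j * n^(k-2*j) := Nat.mul_le_mul (Nat.pow_le_pow_left ha j) (Nat.pow_le_pow_left hd _)
    _ = n^(j + (k - 2*j)) := (pow_add n j (k-2*j)).symm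
    _ ≤ n^(k-2) := Nat.pow_le_pow_right hn (by omega)

lemma sum_est (a d n k : ℕ) (ha : a ≤ n) (hd : d ≤ n) (hn : 1 ≤ n) :
    ∑ j ∈ range (a+1), (-1:ℤ)^j * (a.choose j : ℤ) * (if 2*j ≤ k then (d.choose (k-2*j) : ℤ) else 0)
      ≤ (d.choose k : ℤ) + k * (n:ℤ)^(k-2) := by
  have hnn : (0:ℤ) ≤ (n:ℤ)^(k-2) := by positivity
  set c : ℤ := (n:ℤ)^(k-2) with hc
  set T : ℕ → ℤ := fun j => (-1:ℤ)^j * (a.choose j : ℤ) * (if 2*j ≤ k then (d.choose (k-2*j) : ℤ) else 0) with hT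
  set B : ℕ → ℤ := fun j => if j = 0 then (d.choose k : ℤ) else (if j < k ∧ 2 ≤ j then c else 0) with hB
  have hTB : ∀ j ∈ range (a+1), T j ≤ B j := by
    intro j _
    rcases Nat.eq_zero_or_pos j with rfl | hj
    · simp [hT, hB]
    rcases Nat.lt_or_ge j 2 with hj2 | hj2
    · have hj1 : j = 1 := by omega
      subst hj1
      have h0 : (0:ℤ) ≤ (a.choose 1 : ℤ) * (if 2*1 ≤ k then (d.choose (k-2*1) : ℤ) else 0) := by
        positivity
      simp only [hT, hB, if_neg (by omega : ¬(1=0)), if_neg (by omega : ¬(1 < k ∧ 2 ≤ 1))]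
      calc (-1:ℤ)^1 * (a.choose 1 : ℤ) * (if 2*1 ≤ k then (d.choose (k-2*1) : ℤ) else 0)
          = -((a.choose 1 : ℤ) * (if 2*1 ≤ k then (d.choose (k-2*1) : ℤ) else 0)) := by ring
        _ ≤ 0 := neg_nonpos_of_nonneg h0
    · simp only [hT, hB, if_neg (by omega : ¬(j=0))]
      by_cases hjk : 2*j ≤ k
      · rw [if_pos hjk, if_pos (⟨by omega, hj2⟩ : j < k ∧ 2 ≤ j)]
        calc (-1:ℤ)^j * (a.choose j : ℤ) * (d.choose (k-2*j) : ℤ)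
            ≤ (a.choose j : ℤ) * (d.choose (k-2*j) : ℤ) := by
              have h0 : (0:ℤ) ≤ (a.choose j : ℤ) * (d.choose (k-2*j) : ℤ) := by positivity
              rcases Nat.even_or_odd j with he | ho
              · rw [he.neg_one_pow, one_mul]
              · rw [ho.neg_one_pow]; nlinarith
          _ ≤ c := by
              rw [hc]
              exact_mod_cast term_bound a d n k j ha hd hn hj2 hjk
      · rw [if_neg hjk, mul_zero]
        split <;> simp [hnn]
  calc ∑ j ∈ range (a+1), T j ≤ ∑ j ∈ range (a+1), B j := Finset.sum_le_sum hTB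
    _ = B 0 + ∑ i ∈ range a, B (i+1) := by rw [Finset.sum_range_succ']; ring
    _ ≤ (d.choose k : ℤ) + k * c := by
        have hB0 : B 0 = (d.choose k : ℤ) := by simp [hB]
        rw [hB0]
        gcongr
        calc ∑ i ∈ range a, B (i+1)
            ≤ ∑ i ∈ range a, (if i + 1 < k then c else 0) := by
              apply Finset.sum_le_sum
              intro i _
              simp only [hB, if_neg (Nat.succ_ne_zero i)]
              split_ifs with h1 h2 <;> first | exact le_rfl | exact hnn | omega
          _ = ∑ i ∈ (range a).filter (fun i => i + 1 < k), c := (Finset.sum_filter _ _).symm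
          _ = ((range a).filter (fun i => i + 1 < k)).card • c := Finset.sum_const c
          _ ≤ k * c := by
              have hsub : (range a).filter (fun i => i + 1 < k) ⊆ range k := by
                intro i hi
                simp only [Finset.mem_filter, Finset.mem_range] at hi ⊢
                omega
              have := Finset.card_le_card hsub
              rw [Finset.card_range] at this
              rw [nsmul_eq_mul]
              exact mul_le_mul_of_nonneg_right (by exact_mod_cast this) hnn

lemma descratio (d n : ℕ) (h : d ≤ n) : ∀ k, d.descFactorial k * n^k ≤ n.descFactorial k * d^k
  | 0 => by simp
  | (k+1) => by
    have h1 : (d - k) * n ≤ (n - k) * d := by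
      rcases le_or_gt d k with hdk | hdk
      · simp [Nat.sub_eq_zero_of_le hdk]
      · rw [Nat.sub_mul, Nat.sub_mul, mul_comm n d]
        have : k * d ≤ k * n := Nat.mul_le_mul_left k h
        omega
    rw [Nat.descFactorial_succ, Nat.descFactorial_succ, pow_succ, pow_succ]
    calc (d - k) * d.descFactorial k * (n^k * n)
        = (d - k) * n * (d.descFactorial k * n^k) := by ring
      _ ≤ (n - k) * d * (n.descFactorial k * d^k) := Nat.mul_le_mul h1 (descratio d n h k)
      _ = (n - k) * n.descFactorial k * (d^k * d) := by ring

lemma choose_ratio (d n k : ℕ) (h : d ≤ n) : d.choose k * n^k ≤ n.choose k * d^k := by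
  have h2 : k.factorial * (d.choose k * n^k) ≤ k.factorial * (n.choose k * d^k) := by
    calc k.factorial * (d.choose k * n^k) = d.descFactorial k * n^k := by
          rw [Nat.descFactorial_eq_factorial_mul_choose]; ring
      _ ≤ n.descFactorial k * d^k := descratio d n h k
      _ = k.factorial * (n.choose k * d^k) := by
          rw [Nat.descFactorial_eq_factorial_mul_choose]; ring
  exact Nat.le_of_mul_le_mul_left h2 k.factorial_pos


lemma main_real (k n d : ℕ) (hk : 3 ≤ k) (hn : 2*k ≤ n) (hd : d ≤ n)
    (L : ℕ) (hL : L ≤ n) (w : ℤ) (habs : |w| ≤ (n.choose k : ℤ))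
    (hle : w ≤ (d.choose k : ℤ) + k * (n:ℤ)^(k-2)) :
    |1 + (w:ℝ)/(n.choose k:ℝ)|^L ≤
      Real.exp ((k:ℝ)*(k.factorial)*2^k) * (1 + ((d:ℝ)/n)^k)^L := by
  have hn1 : (1:ℕ) ≤ n := by omega
  have hnR : (0:ℝ) < n := by
    have : 0 < n := by omega
    exact_mod_cast this
  have hkn : k ≤ n := by omega
  have hch : 0 < n.choose k := Nat.choose_pos hkn
  have hchR : (0:ℝ) < (n.choose k : ℝ) := by exact_mod_cast hch
  set c : ℝ := (k:ℝ)*(k.factorial)*2^k with hc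
  have hc0 : 0 ≤ c := by positivity
  set x : ℝ := (d:ℝ)/n with hx
  have hx0 : 0 ≤ x := by positivity
  have hlow : (n:ℝ)^k ≤ 2^k * (k.factorial) * (n.choose k) := by
    have h1 : (n + 1 - k)^k ≤ k.factorial * n.choose k := by
      rw [← Nat.descFactorial_eq_factorial_mul_choose]
      exact Nat.pow_sub_le_descFactorial n k
    have h1R : (((n + 1 - k : ℕ)):ℝ)^k ≤ (k.factorial : ℝ) * (n.choose k : ℝ) := by
      exact_mod_cast h1
    have h2 : (n:ℝ)/2 ≤ ((n + 1 - k : ℕ):ℝ) := by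
      have hcast : ((n + 1 - k : ℕ):ℝ) = (n:ℝ) + 1 - k := by
        have : k ≤ n + 1 := by omega
        push_cast [this]; ring
      rw [hcast]
      have : (k:ℝ) ≤ (n:ℝ)/2 := by
        have h2k : ((2*k : ℕ):ℝ) ≤ (n:ℝ) := by exact_mod_cast hn
        push_cast at h2k
        linarith
      linarith
    have h3 : ((n:ℝ)/2)^k ≤ (((n + 1 - k : ℕ)):ℝ)^k :=
      pow_le_pow_left₀ (by positivity) h2 k
    calc (n:ℝ)^k = 2^k * (((n:ℝ)/2)^k) := by rw [div_pow]; field_simp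
      _ ≤ 2^k * (((n + 1 - k : ℕ)):ℝ)^k := mul_le_mul_of_nonneg_left h3 (by positivity)
      _ ≤ 2^k * ((k.factorial) * (n.choose k)) := mul_le_mul_of_nonneg_left h1R (by positivity)
      _ = 2^k * (k.factorial) * (n.choose k) := by ring
  have hratio : (d.choose k : ℝ) / (n.choose k : ℝ) ≤ x^k := by
    have h1R : (d.choose k : ℝ) * (n:ℝ)^k ≤ (n.choose k : ℝ) * (d:ℝ)^k := by
      exact_mod_cast choose_ratio d n k hd
    rw [hx, div_pow, div_le_div_iff₀ hchR (by positivity)]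
    linarith
  have herr : (k:ℝ) * (n:ℝ)^(k-2) / (n.choose k : ℝ) ≤ c / n := by
    rw [div_le_div_iff₀ hchR hnR]
    have e1 : (n:ℝ)^(k-2) * (n:ℝ)^2 = (n:ℝ)^k := by
      rw [← pow_add]; congr 1; omega
    have hps : (0:ℝ) ≤ (k:ℝ)*(n:ℝ)^(k-2) := by positivity
    have hn1R : (1:ℝ) ≤ (n:ℝ) := by exact_mod_cast hn1
    have hnsq : (n:ℝ) ≤ (n:ℝ)^2 := by nlinarith
    calc (k:ℝ) * (n:ℝ)^(k-2) * n ≤ (k:ℝ) * (n:ℝ)^(k-2) * (n:ℝ)^2 :=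
          mul_le_mul_of_nonneg_left hnsq hps
      _ = (k:ℝ) * ((n:ℝ)^(k-2) * (n:ℝ)^2) := by ring
      _ = (k:ℝ) * (n:ℝ)^k := by rw [e1]
      _ ≤ (k:ℝ) * (2^k * (k.factorial) * (n.choose k)) :=
          mul_le_mul_of_nonneg_left hlow (by positivity)
      _ = c * (n.choose k) := by rw [hc]; ring
  -- base bound
  have hwR : (w:ℝ) ≤ (d.choose k : ℝ) + k * (n:ℝ)^(k-2) := by exact_mod_cast hle
  have hB0 : (0:ℝ) ≤ 1 + (w:ℝ)/(n.choose k:ℝ) := by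
    have h1 : -(n.choose k : ℤ) ≤ w := by
      have := (abs_le.mp habs).1; linarith
    have hR : -((n.choose k : ℝ)) ≤ (w:ℝ) := by exact_mod_cast h1
    have h2 : (-1:ℝ) ≤ (w:ℝ)/(n.choose k:ℝ) := by
      rw [le_div_iff₀ hchR]
      linarith
    linarith
  -- combine
  have hbase : 1 + (w:ℝ)/(n.choose k:ℝ) ≤ (1 + x^k) * (1 + c/n) := by
    have h1 : (w:ℝ)/(n.choose k:ℝ) ≤ x^k + c/n := by
      calc (w:ℝ)/(n.choose k:ℝ) ≤ ((d.choose k : ℝ) + k * (n:ℝ)^(k-2))/(n.choose k:ℝ) :=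
            by gcongr
        _ = (d.choose k : ℝ)/(n.choose k:ℝ) + (k:ℝ) * (n:ℝ)^(k-2)/(n.choose k:ℝ) := by ring
        _ ≤ x^k + c/n := add_le_add hratio herr
    have hcn : 0 ≤ c/n := by positivity
    have hxk : 0 ≤ x^k := by positivity
    nlinarith
  have habs' : |1 + (w:ℝ)/(n.choose k:ℝ)| = 1 + (w:ℝ)/(n.choose k:ℝ) := abs_of_nonneg hB0
  rw [habs']
  calc (1 + (w:ℝ)/(n.choose k:ℝ))^L ≤ ((1 + x^k) * (1 + c/n))^L :=
        pow_le_pow_left₀ hB0 hbase L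
    _ = (1 + c/n)^L * (1 + x^k)^L := by rw [mul_pow]; ring
    _ ≤ Real.exp c * (1 + x^k)^L := by
        have h1 : (1 + c/n) ≤ Real.exp (c/n) := by
          have := Real.add_one_le_exp (c/n)
          linarith
        have h2 : (1 + c/n)^L ≤ (Real.exp (c/n))^L :=
          pow_le_pow_left₀ (by positivity) h1 L
        have h3 : (Real.exp (c/n))^L = Real.exp (c * L / n) := by
          rw [← Real.exp_nat_mul]
          congr 1; ring
        have h4 : Real.exp (c * L / n) ≤ Real.exp c := by
          apply Real.exp_le_exp.mpr
          rw [div_le_iff₀ hnR]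
          have hLR : (L:ℝ) ≤ (n:ℝ) := by exact_mod_cast hL
          nlinarith
        have hxpow : (0:ℝ) ≤ (1 + x^k)^L := by positivity
        calc (1 + c/n)^L * (1 + x^k)^L ≤ (Real.exp (c/n))^L * (1 + x^k)^L :=
              mul_le_mul_of_nonneg_right h2 hxpow
          _ = Real.exp (c*L/n) * (1 + x^k)^L := by rw [h3]
          _ ≤ Real.exp c * (1 + x^k)^L :=
              mul_le_mul_of_nonneg_right (h4) hxpow


end Helpers

/-- Extremal-area estimate: for `L ≤ n` and `m − n/2 ≤ −n^{1−4/(3k)}`, or `k`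
even and `m − n/2 ≥ n^{1−4/(3k)}`,
`|1 + ω_{n,m,k}/C(n,k)|^L ≤ C (1 + (1−2m/n)^k)^L`. -/
theorem extremal_area_estimate (k : ℕ) (hk : 3 ≤ k) :
    ∃ C : ℝ, 0 < C ∧ ∃ N : ℕ, ∀ n : ℕ, N ≤ n → ∀ L : ℕ, L ≤ n → ∀ m : ℕ, m ≤ n →
      ((m : ℝ) - n / 2 ≤ -((n : ℝ) ^ ((1 : ℝ) - 4 / (3 * k))) ∨
        (Even k ∧ (n : ℝ) ^ ((1 : ℝ) - 4 / (3 * k)) ≤ (m : ℝ) - n / 2)) →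
      |1 + (omegaW n m k : ℝ) / (n.choose k : ℝ)| ^ L ≤
        C * (1 + (1 - 2 * (m : ℝ) / n) ^ k) ^ L := by
  refine ⟨Real.exp ((k:ℝ)*(k.factorial)*2^k), Real.exp_pos _, 2*k, ?_⟩
  intro n hn L hL m hm hcase
  have hn0 : 0 < n := by omega
  have hnR : (0:ℝ) < n := by exact_mod_cast hn0
  have hexp : (0:ℝ) < (n:ℝ) ^ ((1:ℝ) - 4/(3*(k:ℝ))) := Real.rpow_pos_of_pos hnR _
  rcases hcase with h1 | ⟨hke, h2⟩
  · -- low case : 2m ≤ n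
    have hmR : (m:ℝ) < (n:ℝ)/2 := by linarith
    have hmn : 2*m ≤ n := by
      have h2m : ((2*m : ℕ):ℝ) < (n:ℝ) := by push_cast; linarith
      exact_mod_cast h2m.le
    set d := n - 2*m with hdd
    have hd : d ≤ n := by omega
    have hdc : ((d:ℕ):ℝ) = (n:ℝ) - 2*(m:ℝ) := by
      rw [hdd, Nat.cast_sub hmn]; push_cast; ring
    have hxeq : ((d:ℝ)/(n:ℝ)) = 1 - 2*(m:ℝ)/n := by
      rw [hdc]; field_simp
    have hω : omegaW n m k ≤ (d.choose k:ℤ) + k*(n:ℤ)^(k-2) := by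
      rw [omegaW_expand_low n m k hmn]
      exact sum_est m d n k hm hd (by omega)
    have hmain := main_real k n d hk hn hd L hL (omegaW n m k) (omegaW_abs_le n m k hm) hω
    rw [hxeq] at hmain
    exact hmain
  · -- high case : n ≤ 2m, k even
    have hmR : (n:ℝ)/2 ≤ (m:ℝ) := by linarith
    have hmn : n ≤ 2*m := by
      have h2m : (n:ℝ) ≤ ((2*m : ℕ):ℝ) := by push_cast; linarith
      exact_mod_cast h2m
    set d := 2*m - n with hdd
    have hd : d ≤ n := by omega
    have hdc : ((d:ℕ):ℝ) = 2*(m:ℝ) - (n:ℝ) := by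
      rw [hdd, Nat.cast_sub hmn]; push_cast; ring
    have hxeq : ((d:ℝ)/(n:ℝ))^k = (1 - 2*(m:ℝ)/n)^k := by
      have : ((d:ℝ)/(n:ℝ)) = -(1 - 2*(m:ℝ)/n) := by
        rw [hdc]; field_simp; ring
      rw [this, hke.neg_pow]
    have hω : omegaW n m k ≤ (d.choose k:ℤ) + k*(n:ℤ)^(k-2) := by
      rw [omegaW_expand_high n m k hmn hm hke]
      exact sum_est (n-m) d n k (by omega) hd (by omega)
    have hmain := main_real k n d hk hn hd L hL (omegaW n m k) (omegaW_abs_le n m k hm) hω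
    rw [hxeq] at hmain
    exact hmain
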